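/- Let 0 < ε ≤ 1/2 and define the sequence of positive integers a_n = ⌊exp(n^{1/2+ε})⌋ if n is a perfect square and a_n = 1 otherwise. Then (i) log a_n ≤ n^{1/2+ε} for all n ≥ 1, but (ii) for every constant C > 0 there exist infinitely many n ≥ 1 with (log a_{n+1})² > C·∑_{k=1}^{n} log(a_k + 1). (Here log is the natural logarithm and ⌊·⌋ is the floor function.) Hence θ = [a_1, a_2, …] lies in PZ_ε but not in 𝒜. -/

import Mathlib

set_option maxHeartbeats 1000000 in
/-- For `0 < ε ≤ 1/2`, the sequence `a_n = ⌊exp(n^{1/2+ε})⌋` for `n` a perfect square and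
`a_n = 1` otherwise satisfies: (i) `log a_n ≤ n^{1/2+ε}` for all `n ≥ 1`, but (ii) for every
`C > 0` there are infinitely many `n ≥ 1` with `(log a_{n+1})² > C·∑_{k=1}^n log(a_k + 1)`;
hence `θ = [a_1, a_2, …]` lies in `PZ_ε` but not in `𝒜`. -/
theorem example_in_PZeps_not_in_A (ε : ℝ) (hε0 : 0 < ε) (hε : ε ≤ 1 / 2) (a : ℕ → ℕ)
    (hadef : ∀ n : ℕ, a n =
      if IsSquare n then ⌊Real.exp ((n : ℝ) ^ ((1 : ℝ) / 2 + ε))⌋₊ else 1) :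
    (∀ n : ℕ, 1 ≤ n → Real.log (a n) ≤ (n : ℝ) ^ ((1 : ℝ) / 2 + ε)) ∧
    ∀ C : ℝ, 0 < C → ∀ N : ℕ, ∃ n : ℕ, N ≤ n ∧ 1 ≤ n ∧
      (Real.log (a (n + 1))) ^ 2 > C * ∑ k ∈ Finset.Icc 1 n, Real.log ((a k : ℝ) + 1) := by
  have hp : (0:ℝ) ≤ 1/2 + ε := by linarith
  have hlog2 : Real.log 2 < 1 := by have := Real.log_two_lt_d9; linarith
  constructor
  · -- part (i)
    intro n hn
    rw [hadef n]
    split_ifs with h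
    · set y := (n:ℝ) ^ ((1:ℝ)/2 + ε) with hy
      have hy0 : 0 ≤ y := Real.rpow_nonneg (Nat.cast_nonneg n) _
      have h1 : (1:ℝ) ≤ Real.exp y := Real.one_le_exp hy0
      have hfl1 : (1:ℕ) ≤ ⌊Real.exp y⌋₊ := Nat.le_floor (by exact_mod_cast h1)
      have hpos : (0:ℝ) < (⌊Real.exp y⌋₊ : ℝ) := by exact_mod_cast hfl1
      have hfl : ((⌊Real.exp y⌋₊ : ℕ) : ℝ) ≤ Real.exp y := Nat.floor_le (by linarith)
      calc Real.log (⌊Real.exp y⌋₊ : ℝ) ≤ Real.log (Real.exp y) :=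
            Real.log_le_log hpos hfl
        _ = y := Real.log_exp y
    · simp [Real.log_one, Real.rpow_nonneg (Nat.cast_nonneg n)]
  · -- part (ii)
    intro C hC N
    set m : ℕ := ⌈Real.exp (Real.log (8*C) / (2*ε))⌉₊ + N + 2 with hm
    have hm2 : 2 ≤ m := by omega
    have hm0 : (0:ℝ) < (m:ℝ) := by positivity
    have hm1 : (1:ℝ) ≤ (m:ℝ) := by exact_mod_cast (by omega : 1 ≤ m)
    have hmexp : Real.exp (Real.log (8*C) / (2*ε)) < (m:ℝ) := by
      have h1 := Nat.le_ceil (Real.exp (Real.log (8*C) / (2*ε)))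
      have hcast : ((⌈Real.exp (Real.log (8*C) / (2*ε))⌉₊ : ℕ) : ℝ) + 1 ≤ (m:ℝ) := by
        exact_mod_cast (by omega : ⌈Real.exp (Real.log (8*C) / (2*ε))⌉₊ + 1 ≤ m)
      linarith
    clear_value m
    set x : ℝ := (m:ℝ) ^ ((1:ℝ) + 2*ε) with hxdef
    have hmx : (m:ℝ) ≤ x := by
      have := Real.rpow_le_rpow_of_exponent_le hm1 (by linarith : (1:ℝ) ≤ 1 + 2*ε)
      rwa [Real.rpow_one] at this
    have hx2 : (2:ℝ) ≤ x := le_trans (by exact_mod_cast hm2) hmx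
    -- key identity: (m²)^(1/2+ε) = x
    have hxeq : ((m^2 : ℕ) : ℝ) ^ ((1:ℝ)/2 + ε) = x := by
      rw [Nat.cast_pow, ← Real.rpow_natCast (m:ℝ) 2, ← Real.rpow_mul (le_of_lt hm0)]
      norm_num
      congr 1
      ring
    -- x > 8 C m
    have hx8 : 8*C*(m:ℝ) < x := by
      have hlogm : Real.log (8*C) / (2*ε) < Real.log (m:ℝ) := by
        have := Real.log_lt_log (Real.exp_pos _) hmexp
        rwa [Real.log_exp] at this
      have h2e : (8:ℝ)*C < (m:ℝ) ^ (2*ε) := by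
        rw [Real.rpow_def_of_pos hm0]
        calc (8:ℝ)*C = Real.exp (Real.log (8*C)) := (Real.exp_log (by linarith)).symm
          _ < Real.exp (Real.log (m:ℝ) * (2*ε)) := by
              apply Real.exp_lt_exp.mpr
              have := (div_lt_iff₀ (by linarith : (0:ℝ) < 2*ε)).mp hlogm
              linarith
      calc 8*C*(m:ℝ) < (m:ℝ) ^ (2*ε) * (m:ℝ) := by nlinarith
        _ = x := by rw [hxdef, Real.rpow_add hm0, Real.rpow_one]; ring
    -- choose n = m² - 1
    have hmm : m < m^2 := by nlinarith
    refine ⟨m^2 - 1, by omega, by omega, ?_⟩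
    have hn1 : m^2 - 1 + 1 = m^2 := by omega
    rw [hn1]
    -- lower bound on log a(m²)
    have hA : x - 1 ≤ Real.log (a (m^2)) := by
      rw [hadef (m^2), if_pos ⟨m, (sq m)⟩, hxeq]
      have hex : (2:ℝ) ≤ Real.exp x := by
        have := Real.add_one_le_exp x; linarith
      have hfl : Real.exp x - 1 < (⌊Real.exp x⌋₊ : ℝ) := Nat.sub_one_lt_floor _
      have hhalf : Real.exp x / 2 ≤ (⌊Real.exp x⌋₊ : ℝ) := by linarith
      calc x - 1 ≤ x - Real.log 2 := by linarith
        _ = Real.log (Real.exp x / 2) := by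
            rw [Real.log_div (by positivity) (by norm_num), Real.log_exp]
        _ ≤ Real.log (⌊Real.exp x⌋₊ : ℝ) := Real.log_le_log (by positivity) hhalf
    -- upper bound on the sum
    have hterm : ∀ k ∈ Finset.Icc 1 (m^2 - 1),
        Real.log ((a k : ℝ) + 1) ≤ 1 + (if IsSquare k then x else 0) := by
      intro k hk
      simp only [Finset.mem_Icc] at hk
      rw [hadef k]
      split_ifs with h
      · set y := (k:ℝ) ^ ((1:ℝ)/2 + ε) with hy
        have hyx : y ≤ x := by
          rw [hy, ← hxeq]
          apply Real.rpow_le_rpow (Nat.cast_nonneg k) _ hp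
          exact_mod_cast (by omega : k ≤ m^2)
        have hfl : ((⌊Real.exp y⌋₊ : ℕ) : ℝ) ≤ Real.exp y :=
          Nat.floor_le (le_of_lt (Real.exp_pos y))
        have hpos : (0:ℝ) < (⌊Real.exp y⌋₊ : ℝ) + 1 := by positivity
        rw [Real.log_le_iff_le_exp hpos]
        have h1 : (1:ℝ) ≤ Real.exp y := Real.one_le_exp (Real.rpow_nonneg (Nat.cast_nonneg k) _)
        calc (⌊Real.exp y⌋₊ : ℝ) + 1 ≤ 2 * Real.exp y := by linarith
          _ ≤ Real.exp 1 * Real.exp y := by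
              nlinarith [Real.add_one_le_exp (1:ℝ), Real.exp_pos y]
          _ = Real.exp (1 + y) := (Real.exp_add 1 y).symm
          _ ≤ Real.exp (1 + x) := by apply Real.exp_le_exp.mpr; linarith
      · push_cast
        rw [Real.log_le_iff_le_exp (by norm_num)]
        have := Real.add_one_le_exp (1:ℝ)
        simp only [add_zero]
        linarith [Real.add_one_le_exp (1:ℝ)]
    -- count squares
    have hcard : ((Finset.Icc 1 (m^2 - 1)).filter (fun k => IsSquare k)).card ≤ m := by
      have : ((Finset.Icc 1 (m^2 - 1)).filter (fun k => IsSquare k)).card ≤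
          (Finset.Icc 1 (m-1)).card := by
        apply Finset.card_le_card_of_injOn Nat.sqrt
        · intro k hk
          simp only [Finset.coe_filter, Set.mem_setOf_eq, Finset.mem_coe, Finset.mem_filter, Finset.mem_Icc] at hk
          obtain ⟨⟨hk1, hk2⟩, j, hj⟩ := hk
          have hjs : Nat.sqrt k = j := by rw [hj, Nat.sqrt_eq]
          have hj0 : 1 ≤ j := by
            rcases Nat.eq_zero_or_pos j with h0 | h0
            · subst h0; simp at hj; omega
            · exact h0
          have hlt : j * j < m * m := by
            have hmpos : 0 < m ^ 2 := Nat.pow_pos (by omega)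
            calc j * j = k := hj.symm
              _ < m ^ 2 := by omega
              _ = m * m := pow_two m
          have hjm : j < m := by
            by_contra hc
            push_neg at hc
            exact absurd (Nat.mul_le_mul hc hc) (by omega)
          simp only [Finset.mem_coe, Finset.mem_Icc, hjs]
          omega
        · intro k1 h1 k2 h2 he
          simp only [Finset.coe_filter, Set.mem_setOf_eq, Finset.mem_Icc] at h1 h2
          obtain ⟨_, j1, hj1⟩ := h1
          obtain ⟨_, j2, hj2⟩ := h2
          rw [hj1, hj2, Nat.sqrt_eq, Nat.sqrt_eq] at he
          rw [hj1, hj2, he]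
      calc _ ≤ (Finset.Icc 1 (m-1)).card := this
        _ = m - 1 := by rw [Nat.card_Icc]; omega
        _ ≤ m := by omega
    have hsum : ∑ k ∈ Finset.Icc 1 (m^2 - 1), Real.log ((a k : ℝ) + 1) ≤ 2 * m * x := by
      calc ∑ k ∈ Finset.Icc 1 (m^2 - 1), Real.log ((a k : ℝ) + 1)
          ≤ ∑ k ∈ Finset.Icc 1 (m^2 - 1), (1 + (if IsSquare k then x else 0)) :=
            Finset.sum_le_sum hterm
        _ = (m^2 - 1 : ℕ) + ((Finset.Icc 1 (m^2 - 1)).filter (fun k => IsSquare k)).card * x := by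
            rw [Finset.sum_add_distrib, Finset.sum_const, ← Finset.sum_filter,
              Finset.sum_const, Nat.card_Icc]
            simp [nsmul_eq_mul]
        _ ≤ (m:ℝ)^2 + (m:ℝ) * x := by
            have h1 : ((m^2 - 1 : ℕ) : ℝ) ≤ (m:ℝ)^2 := by
              have : ((m^2 - 1 : ℕ) : ℝ) ≤ ((m^2 : ℕ) : ℝ) := by exact_mod_cast Nat.sub_le _ _
              push_cast at this ⊢; linarith
            have h2 : (((Finset.Icc 1 (m^2 - 1)).filter (fun k => IsSquare k)).card : ℝ) ≤ m := by
              exact_mod_cast hcard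
            have hx0 : (0:ℝ) ≤ x := by linarith
            nlinarith
        _ ≤ 2 * m * x := by nlinarith
    -- conclude
    have hlogpos : (0:ℝ) ≤ x - 1 := by linarith
    have hsq : (x - 1)^2 ≤ (Real.log (a (m^2)))^2 := by
      apply pow_le_pow_left₀ hlogpos hA
    have hmain : C * (2 * m * x) < (x - 1)^2 := by nlinarith
    have : C * ∑ k ∈ Finset.Icc 1 (m^2 - 1), Real.log ((a k : ℝ) + 1) ≤ C * (2 * m * x) :=
      mul_le_mul_of_nonneg_left hsum (le_of_lt hC)
    linarith
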